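/- Let Q_{0,x} be the quenched polymer measure assigning each up-right path from 0 to x probability proportional to the product of its weights. For any k, l, m ∈ ℤ_{≥0} and x ∈ ℤ²_{≥0} with x + l·e_1 - m·e_2 ∈ ℤ²_{≥0}, the quenched probability Q_{0,x}{τ ≥ k} ≤ Q_{0, x + l e_1 - m e_2}{τ ≥ k}. That is, shifting the endpoint right or down increases the probability that the polymer takes at least k initial e_1 steps. -/
import Mathlib


/-- The `j`-th vertex of the up-right path started at `u` whose `i`-th step is
`e₁` if `σ i = true` and `e₂` if `σ i = false`. -/
def pathVertex (u : ℤ × ℤ) (σ : ℕ → Bool) (j : ℕ) : ℤ × ℤ :=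
  (u.1 + ((Finset.range j).filter fun i => σ i = true).card,
   u.2 + ((Finset.range j).filter fun i => σ i = false).card)

/-- The polymer partition function `Z_{u,v}` over up-right paths from `u` to `v`. -/
noncomputable def Zfun (Y : ℤ × ℤ → ℝ) (u v : ℤ × ℤ) : ℝ :=
  if u.1 ≤ v.1 ∧ u.2 ≤ v.2 then
    ∑ σ : Fin ((v.1 - u.1).toNat + (v.2 - u.2).toNat) → Bool,
      (if (Finset.univ.filter fun i => σ i = true).card = (v.1 - u.1).toNat then
        ∏ j ∈ Finset.range ((v.1 - u.1).toNat + (v.2 - u.2).toNat + 1),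
          Y (pathVertex u
              (fun i => if h : i < (v.1 - u.1).toNat + (v.2 - u.2).toNat then σ ⟨i, h⟩
                        else false) j)
      else 0)
  else 0

/-- The restricted partition function `Z_{0,z}(τ ≥ k)`: the sum over up-right paths
from `0` to `z` whose first `k` steps are all `e₁` steps. -/
noncomputable def ZExit (Y : ℤ × ℤ → ℝ) (z : ℤ × ℤ) (k : ℕ) : ℝ :=
  if 0 ≤ z.1 ∧ 0 ≤ z.2 then
    ∑ σ : Fin (z.1.toNat + z.2.toNat) → Bool,
      (if (Finset.univ.filter fun i => σ i = true).card = z.1.toNat ∧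
          (∀ i : Fin (z.1.toNat + z.2.toNat), (i : ℕ) < k → σ i = true) then
        ∏ j ∈ Finset.range (z.1.toNat + z.2.toNat + 1),
          Y (pathVertex 0
              (fun i => if h : i < z.1.toNat + z.2.toNat then σ ⟨i, h⟩ else false) j)
      else 0)
  else 0

/-- `Q_{0,x}{τ ≥ k}`, the quenched probability that the polymer from `0` to `x`
takes at least `k` initial `e₁` steps. -/
noncomputable def QExit (Y : ℤ × ℤ → ℝ) (x : ℤ × ℤ) (k : ℕ) : ℝ :=
  ZExit Y x k / Zfun Y 0 x

noncomputable def Zr (Y : ℤ × ℤ → ℝ) (u : ℤ × ℤ) : ℕ → ℕ → ℝ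
  | 0, 0 => Y u
  | p+1, 0 => Zr Y u p 0 * Y (u.1 + (p+1 : ℕ), u.2)
  | 0, q+1 => Zr Y u 0 q * Y (u.1, u.2 + (q+1 : ℕ))
  | p+1, q+1 => (Zr Y u p (q+1) + Zr Y u (p+1) q) * Y (u.1 + (p+1 : ℕ), u.2 + (q+1 : ℕ))

lemma Zr_pos (Y : ℤ × ℤ → ℝ) (hY : ∀ z, 0 < Y z) (u : ℤ × ℤ) : ∀ p q, 0 < Zr Y u p q
  | 0, 0 => by rw [Zr]; exact hY u
  | p+1, 0 => by rw [Zr]; exact mul_pos (Zr_pos Y hY u p 0) (hY _)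
  | 0, q+1 => by rw [Zr]; exact mul_pos (Zr_pos Y hY u 0 q) (hY _)
  | p+1, q+1 => by
      rw [Zr]
      exact mul_pos (add_pos (Zr_pos Y hY u p (q+1)) (Zr_pos Y hY u (p+1) q)) (hY _)

lemma Zr_s0 (Y : ℤ × ℤ → ℝ) (u : ℤ × ℤ) (p : ℕ) :
    Zr Y u (p+1) 0 = Zr Y u p 0 * Y (u.1 + (p+1 : ℕ), u.2) := by rw [Zr]

lemma Zr_0s (Y : ℤ × ℤ → ℝ) (u : ℤ × ℤ) (q : ℕ) :
    Zr Y u 0 (q+1) = Zr Y u 0 q * Y (u.1, u.2 + (q+1 : ℕ)) := by rw [Zr]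

lemma Zr_ss (Y : ℤ × ℤ → ℝ) (u : ℤ × ℤ) (p q : ℕ) :
    Zr Y u (p+1) (q+1) =
      (Zr Y u p (q+1) + Zr Y u (p+1) q) * Y (u.1 + (p+1 : ℕ), u.2 + (q+1 : ℕ)) := by rw [Zr]

def I1 (Y : ℤ × ℤ → ℝ) (u : ℤ × ℤ) (a q : ℕ) : Prop :=
  Zr Y (u.1+1, u.2) a q * Zr Y u (a+1+1) q ≤ Zr Y (u.1+1, u.2) (a+1) q * Zr Y u (a+1) q
def I2 (Y : ℤ × ℤ → ℝ) (u : ℤ × ℤ) (a q : ℕ) : Prop :=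
  Zr Y (u.1+1, u.2) a (q+1) * Zr Y u (a+1) q ≤ Zr Y (u.1+1, u.2) a q * Zr Y u (a+1) (q+1)

lemma key_i_zero (Y : ℤ × ℤ → ℝ) (u : ℤ × ℤ) (a : ℕ) : I1 Y u a 0 := by
  unfold I1
  refine le_of_eq ?_
  rw [Zr_s0 Y (u.1+1, u.2) a, Zr_s0 Y u (a+1)]
  push_cast
  ring

lemma key_ii_zero (Y : ℤ × ℤ → ℝ) (u : ℤ × ℤ) (hY : ∀ z, 0 < Y z) (q : ℕ) : I2 Y u 0 q := by
  unfold I2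
  have h1 := Zr_0s Y (u.1+1, u.2) q
  have h2 := Zr_ss Y u 0 q
  norm_num at h1 h2
  have p1 := Zr_pos Y hY (u.1+1, u.2) 0 q
  have p2 := Zr_pos Y hY u 0 (q+1)
  have p4 := hY (u.1 + 1, u.2 + ((q:ℤ)+1))
  rw [show (0:ℕ)+1 = 1 from rfl, h1, h2]
  push_cast
  nlinarith [mul_pos (mul_pos p1 p2) p4]

lemma iii_of (Y : ℤ × ℤ → ℝ) (u : ℤ × ℤ) (hY : ∀ z, 0 < Y z) (a q : ℕ)
    (h1 : I1 Y u a q) (h2 : I2 Y u a q) :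
    Zr Y (u.1+1, u.2) a (q+1) * Zr Y u (a+1+1) q ≤
    Zr Y (u.1+1, u.2) (a+1) q * Zr Y u (a+1) (q+1) := by
  unfold I1 I2 at *
  have pA1 := Zr_pos Y hY u (a+1) q
  have pA1' := Zr_pos Y hY u (a+1) (q+1)
  have pA2 := Zr_pos Y hY u (a+1+1) q
  have m1 := mul_le_mul_of_nonneg_right h2 pA2.le
  have m2 := mul_le_mul_of_nonneg_right h1 pA1'.le
  nlinarith [m1, m2, pA1]

lemma i_succ (Y : ℤ × ℤ → ℝ) (u : ℤ × ℤ) (hY : ∀ z, 0 < Y z) (a q : ℕ)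
    (h3 : Zr Y (u.1+1, u.2) a (q+1) * Zr Y u (a+1+1) q ≤
      Zr Y (u.1+1, u.2) (a+1) q * Zr Y u (a+1) (q+1)) : I1 Y u a (q+1) := by
  unfold I1
  have hB := Zr_ss Y (u.1+1, u.2) a q
  have hA := Zr_ss Y u (a+1) q
  norm_num at hB hA
  rw [show (u.1 + 1 + ((a:ℤ) + 1)) = u.1 + ((a:ℤ) + 1 + 1) from by ring] at hB
  rw [hB, hA]
  have w := hY (u.1 + (↑a + 1 + 1), u.2 + (↑q + 1))
  have pB := Zr_pos Y hY (u.1+1, u.2) a (q+1)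
  have pB' := Zr_pos Y hY (u.1+1, u.2) (a+1) q
  have pA := Zr_pos Y hY u (a+1) (q+1)
  have pA2 := Zr_pos Y hY u (a+1+1) q
  nlinarith [h3, w, pB, pB', pA, pA2]

lemma ii_succ (Y : ℤ × ℤ → ℝ) (u : ℤ × ℤ) (hY : ∀ z, 0 < Y z) (a q : ℕ)
    (h3 : Zr Y (u.1+1, u.2) a (q+1) * Zr Y u (a+1+1) q ≤
      Zr Y (u.1+1, u.2) (a+1) q * Zr Y u (a+1) (q+1)) : I2 Y u (a+1) q := by
  unfold I2
  have hB := Zr_ss Y (u.1+1, u.2) a q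
  have hA := Zr_ss Y u (a+1) q
  norm_num at hB hA
  rw [show (u.1 + 1 + ((a:ℤ) + 1)) = u.1 + ((a:ℤ) + 1 + 1) from by ring] at hB
  rw [hB, hA]
  have w := hY (u.1 + (↑a + 1 + 1), u.2 + (↑q + 1))
  have pB := Zr_pos Y hY (u.1+1, u.2) a (q+1)
  have pB' := Zr_pos Y hY (u.1+1, u.2) (a+1) q
  have pA := Zr_pos Y hY u (a+1) (q+1)
  have pA2 := Zr_pos Y hY u (a+1+1) q
  nlinarith [h3, w, pB, pB', pA, pA2]

open Finset

lemma key12 (Y : ℤ × ℤ → ℝ) (u : ℤ × ℤ) (hY : ∀ z, 0 < Y z) :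
    ∀ q, (∀ a, I1 Y u a q) ∧ (∀ a, I2 Y u a q) := by
  intro q
  induction q with
  | zero =>
    have h1 : ∀ a, I1 Y u a 0 := fun a => key_i_zero Y u a
    refine ⟨h1, ?_⟩
    intro a
    induction a with
    | zero => exact key_ii_zero Y u hY 0
    | succ a iha => exact ii_succ Y u hY a 0 (iii_of Y u hY a 0 (h1 a) iha)
  | succ q ih =>
    obtain ⟨ih1, ih2⟩ := ih
    have h1 : ∀ a, I1 Y u a (q+1) :=
      fun a => i_succ Y u hY a q (iii_of Y u hY a q (ih1 a) (ih2 a))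
    refine ⟨h1, ?_⟩
    intro a
    induction a with
    | zero => exact key_ii_zero Y u hY (q+1)
    | succ a iha => exact ii_succ Y u hY a (q+1) (iii_of Y u hY a (q+1) (h1 a) iha)

-- single-source-shift ratio monotonicity, division form
lemma gmono (Y : ℤ × ℤ → ℝ) (u : ℤ × ℤ) (hY : ∀ z, 0 < Y z) (b q : ℕ) :
    Zr Y (u.1+1, u.2) b q / Zr Y u (b+1) q ≤
    Zr Y (u.1+1, u.2) (b+1) q / Zr Y u (b+1+1) q := by
  rw [div_le_div_iff₀ (Zr_pos Y hY u (b+1) q) (Zr_pos Y hY u (b+1+1) q)]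
  have := (key12 Y u hY q).1 b
  unfold I1 at this
  nlinarith [this]

lemma ganti (Y : ℤ × ℤ → ℝ) (u : ℤ × ℤ) (hY : ∀ z, 0 < Y z) (b q : ℕ) :
    Zr Y (u.1+1, u.2) b (q+1) / Zr Y u (b+1) (q+1) ≤
    Zr Y (u.1+1, u.2) b q / Zr Y u (b+1) q := by
  rw [div_le_div_iff₀ (Zr_pos Y hY u (b+1) (q+1)) (Zr_pos Y hY u (b+1) q)]
  have := (key12 Y u hY q).2 b
  unfold I2 at this
  nlinarith [this]

lemma tele (x y z : ℝ) (hy : y ≠ 0) : x/z = (x/y)*(y/z) := by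
  field_simp

lemma ratio_mono (Y : ℤ × ℤ → ℝ) (hY : ∀ z, 0 < Y z) :
    ∀ (k : ℕ) (u : ℤ × ℤ) (a q : ℕ),
    Zr Y (u.1 + (k : ℤ), u.2) a q / Zr Y u (k+a) q ≤
    Zr Y (u.1 + (k : ℤ), u.2) (a+1) q / Zr Y u (k+a+1) q := by
  intro k
  induction k with
  | zero =>
    intro u a q
    simp only [Nat.cast_zero, add_zero, Prod.mk.eta, Nat.zero_add]
    rw [div_self (Zr_pos Y hY u a q).ne', div_self (Zr_pos Y hY u (a+1) q).ne']
  | succ k ih =>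
    intro u a q
    set e : ℤ × ℤ := (u.1+1, u.2) with he
    have hpt : ((u.1 + ((k+1 : ℕ) : ℤ), u.2) : ℤ × ℤ) = (e.1 + (k : ℤ), e.2) := by
      simp [he]; push_cast; ring
    rw [hpt]
    have key : ∀ a' : ℕ, Zr Y (e.1 + (k:ℤ), e.2) a' q / Zr Y u (k+1+a') q
        = (Zr Y (e.1 + (k:ℤ), e.2) a' q / Zr Y e (k+a') q) *
          (Zr Y e (k+a') q / Zr Y u (k+a'+1) q) := by
      intro a'
      rw [show k+1+a' = k+a'+1 by omega]
      exact tele _ _ _ (Zr_pos Y hY e (k+a') q).ne'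
    rw [key a, show k+1+a+1 = k+1+(a+1) by omega, key (a+1)]
    have h1 := ih e a q
    have h2 := gmono Y u hY (k+a) q
    rw [← he] at h2
    rw [show k+(a+1) = k+a+1 by omega]
    exact mul_le_mul h1 h2
      (le_of_lt (div_pos (Zr_pos Y hY e (k+a) q) (Zr_pos Y hY u (k+a+1) q)))
      (le_of_lt (div_pos (Zr_pos Y hY _ (a+1) q) (Zr_pos Y hY e (k+a+1) q)))

lemma ratio_anti (Y : ℤ × ℤ → ℝ) (hY : ∀ z, 0 < Y z) :
    ∀ (k : ℕ) (u : ℤ × ℤ) (a q : ℕ),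
    Zr Y (u.1 + (k : ℤ), u.2) a (q+1) / Zr Y u (k+a) (q+1) ≤
    Zr Y (u.1 + (k : ℤ), u.2) a q / Zr Y u (k+a) q := by
  intro k
  induction k with
  | zero =>
    intro u a q
    simp only [Nat.cast_zero, add_zero, Prod.mk.eta, Nat.zero_add]
    rw [div_self (Zr_pos Y hY u a (q+1)).ne', div_self (Zr_pos Y hY u a q).ne']
  | succ k ih =>
    intro u a q
    set e : ℤ × ℤ := (u.1+1, u.2) with he
    have hpt : ((u.1 + ((k+1 : ℕ) : ℤ), u.2) : ℤ × ℤ) = (e.1 + (k : ℤ), e.2) := by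
      simp [he]; push_cast; ring
    rw [hpt]
    have key : ∀ q' : ℕ, Zr Y (e.1 + (k:ℤ), e.2) a q' / Zr Y u (k+1+a) q'
        = (Zr Y (e.1 + (k:ℤ), e.2) a q' / Zr Y e (k+a) q') *
          (Zr Y e (k+a) q' / Zr Y u (k+a+1) q') := by
      intro q'
      rw [show k+1+a = k+a+1 by omega]
      exact tele _ _ _ (Zr_pos Y hY e (k+a) q').ne'
    rw [key q, key (q+1)]
    have h1 := ih e a q
    have h2 := ganti Y u hY (k+a) q
    rw [← he] at h2
    exact mul_le_mul h1 h2
      (le_of_lt (div_pos (Zr_pos Y hY e (k+a) (q+1)) (Zr_pos Y hY u (k+a+1) (q+1))))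
      (le_of_lt (div_pos (Zr_pos Y hY _ a q) (Zr_pos Y hY e (k+a) q)))

def extb (n : ℕ) (σ : Fin n → Bool) : ℕ → Bool := fun i => if h : i < n then σ ⟨i, h⟩ else false

lemma extb_lt {n : ℕ} (σ : Fin n → Bool) {i : ℕ} (h : i < n) : extb n σ i = σ ⟨i, h⟩ := dif_pos h

lemma pathVertex_zero (u : ℤ × ℤ) (σ : ℕ → Bool) : pathVertex u σ 0 = u := by
  simp [pathVertex]

lemma pathVertex_congr (u : ℤ × ℤ) (σ τ : ℕ → Bool) (j : ℕ) (h : ∀ i < j, σ i = τ i) :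
    pathVertex u σ j = pathVertex u τ j := by
  unfold pathVertex
  have h1 : (range j).filter (fun i => σ i = true) = (range j).filter (fun i => τ i = true) := by
    apply filter_congr; intro i hi; rw [h i (mem_range.mp hi)]
  have h2 : (range j).filter (fun i => σ i = false) = (range j).filter (fun i => τ i = false) := by
    apply filter_congr; intro i hi; rw [h i (mem_range.mp hi)]
  rw [h1, h2]

lemma card_extb_true (n : ℕ) (σ : Fin n → Bool) :
    ((range n).filter fun i => extb n σ i = true).card
      = (univ.filter fun i : Fin n => σ i = true).card := by
  rw [card_filter, card_filter, ← Fin.sum_univ_eq_sum_range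
    (fun i => if extb n σ i = true then 1 else 0) n]
  refine Finset.sum_congr rfl fun i _ => ?_
  rw [extb_lt σ i.isLt]

lemma card_extb_false (n : ℕ) (σ : Fin n → Bool) :
    ((range n).filter fun i => extb n σ i = false).card
      = (univ.filter fun i : Fin n => σ i = false).card := by
  rw [card_filter, card_filter, ← Fin.sum_univ_eq_sum_range
    (fun i => if extb n σ i = false then 1 else 0) n]
  refine Finset.sum_congr rfl fun i _ => ?_
  rw [extb_lt σ i.isLt]

lemma card_true_add_false (n : ℕ) (σ : Fin n → Bool) :
    (univ.filter fun i : Fin n => σ i = true).card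
      + (univ.filter fun i : Fin n => σ i = false).card = n := by
  have := card_filter_add_card_filter_not (s := (univ : Finset (Fin n)))
    (p := fun i => σ i = true)
  simp only [Bool.not_eq_true] at this
  simpa using this

lemma pathVertex_ext_end (u : ℤ × ℤ) (n p q : ℕ) (σ : Fin n → Bool) (hn : p + q = n)
    (hc : (univ.filter fun i : Fin n => σ i = true).card = p) :
    pathVertex u (extb n σ) n = (u.1 + (p : ℤ), u.2 + (q : ℤ)) := by
  have hf : (univ.filter fun i : Fin n => σ i = false).card = q := by
    have := card_true_add_false n σ; omega
  unfold pathVertex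
  rw [card_extb_true, card_extb_false, hc, hf]

lemma sum_snoc (s : ℕ) (f : (Fin (s+1) → Bool) → ℝ) :
    ∑ σ : Fin (s+1) → Bool, f σ
      = ∑ τ : Fin s → Bool, (f (Fin.snoc τ true) + f (Fin.snoc τ false)) := by
  rw [← Equiv.sum_comp (Fin.snocEquiv (fun _ => Bool)) f, Fintype.sum_prod_type,
    Fintype.sum_bool, ← Finset.sum_add_distrib]
  rfl

lemma sum_cons (s : ℕ) (f : (Fin (s+1) → Bool) → ℝ) :
    ∑ σ : Fin (s+1) → Bool, f σ
      = ∑ τ : Fin s → Bool, (f (Fin.cons true τ) + f (Fin.cons false τ)) := by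
  rw [← Equiv.sum_comp (Fin.consEquiv (fun _ => Bool)) f, Fintype.sum_prod_type,
    Fintype.sum_bool, ← Finset.sum_add_distrib]
  rfl

lemma extb_snoc (s : ℕ) (τ : Fin s → Bool) (b : Bool) {i : ℕ} (hi : i < s) :
    extb (s+1) (Fin.snoc τ b) i = extb s τ i := by
  rw [extb_lt _ (Nat.lt_succ_of_lt hi), extb_lt _ hi]
  exact Fin.snoc_castSucc (α := fun _ : Fin (s+1) => Bool) b τ ⟨i, hi⟩

lemma card_snoc (s : ℕ) (τ : Fin s → Bool) (b : Bool) :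
    (univ.filter fun i : Fin (s+1) => (Fin.snoc τ b : Fin (s+1) → Bool) i = true).card
      = (univ.filter fun i : Fin s => τ i = true).card + (if b = true then 1 else 0) := by
  rw [card_filter, card_filter, Fin.sum_univ_castSucc]
  congr 1
  · exact Finset.sum_congr rfl fun i _ => by
      rw [Fin.snoc_castSucc (α := fun _ : Fin (s+1) => Bool)]
  · rw [Fin.snoc_last (α := fun _ : Fin (s+1) => Bool)]

lemma card_cons (s : ℕ) (τ : Fin s → Bool) (b : Bool) :
    (univ.filter fun i : Fin (s+1) => (Fin.cons b τ : Fin (s+1) → Bool) i = true).card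
      = (if b = true then 1 else 0) + (univ.filter fun i : Fin s => τ i = true).card := by
  rw [card_filter, card_filter, Fin.sum_univ_succ]
  congr 1

lemma extb_cons_eq (s : ℕ) (τ : Fin s → Bool) (b : Bool) :
    (fun i => extb (s+1) (Fin.cons b τ) (i+1)) = extb s τ := by
  funext i
  by_cases hi : i < s
  · rw [extb_lt _ (by omega : i+1 < s+1), extb_lt _ hi]
    exact Fin.cons_succ (α := fun _ : Fin (s+1) => Bool) b τ ⟨i, hi⟩
  · unfold extb
    rw [dif_neg (by omega), dif_neg hi]

lemma extb_cons_zero (s : ℕ) (τ : Fin s → Bool) (b : Bool) :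
    extb (s+1) (Fin.cons b τ) 0 = b := by
  rw [extb_lt _ (Nat.succ_pos s)]
  exact Fin.cons_zero (α := fun _ : Fin (s+1) => Bool) b τ

lemma pathVertex_shift (u : ℤ × ℤ) (σ : ℕ → Bool) (h0 : σ 0 = true) (j : ℕ) :
    pathVertex u σ (j+1) = pathVertex (u.1+1, u.2) (fun i => σ (i+1)) j := by
  unfold pathVertex
  rw [card_filter, card_filter, card_filter, card_filter,
    Finset.sum_range_succ' (fun i => if σ i = true then 1 else 0) j,
    Finset.sum_range_succ' (fun i => if σ i = false then 1 else 0) j]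
  simp only [h0, Prod.mk.injEq]
  norm_num
  push_cast
  ring

noncomputable def Wn (Y : ℤ × ℤ → ℝ) (u : ℤ × ℤ) (n p : ℕ) : ℝ :=
  ∑ σ : Fin n → Bool,
    if (univ.filter fun i => σ i = true).card = p then
      ∏ j ∈ range (n+1), Y (pathVertex u (extb n σ) j)
    else 0

lemma Wn_rec (Y : ℤ × ℤ → ℝ) (u : ℤ × ℤ) (s p : ℕ) (hp : p ≤ s+1) :
    Wn Y u (s+1) p = Y (u.1+(p:ℤ), u.2+((s+1-p : ℕ):ℤ)) *
      ((if p = 0 then 0 else Wn Y u s (p-1)) + (if p = s+1 then 0 else Wn Y u s p)) := by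
  set C := Y (u.1+(p:ℤ), u.2+((s+1-p : ℕ):ℤ)) with hC
  have stepgen : ∀ (τ : Fin s → Bool) (b : Bool),
      (if (univ.filter fun i => (Fin.snoc τ b : Fin (s+1) → Bool) i = true).card = p then
        ∏ j ∈ range (s+1+1), Y (pathVertex u (extb (s+1) (Fin.snoc τ b)) j) else 0)
      = (if (univ.filter fun i : Fin s => τ i = true).card + (if b = true then 1 else 0) = p
          then C * ∏ j ∈ range (s+1), Y (pathVertex u (extb s τ) j) else 0) := by
    intro τ b
    simp only [card_snoc]
    by_cases hc : (univ.filter fun i : Fin s => τ i = true).card + (if b = true then 1 else 0) = p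
    · rw [if_pos hc, if_pos hc, Finset.prod_range_succ]
      have hend : pathVertex u (extb (s+1) (Fin.snoc τ b)) (s+1)
          = (u.1+(p:ℤ), u.2+((s+1-p:ℕ):ℤ)) := by
        apply pathVertex_ext_end u (s+1) p (s+1-p) _ (by omega)
        rw [card_snoc]; exact hc
      rw [hend, ← hC, mul_comm]
      congr 1
      apply Finset.prod_congr rfl
      intro j hj
      have hj' : j ≤ s := by have := mem_range.mp hj; omega
      congr 1
      apply pathVertex_congr
      intro i hi
      exact extb_snoc s τ b (by omega)
    · rw [if_neg hc, if_neg hc]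
  have stepT : ∀ τ : Fin s → Bool,
      (if (univ.filter fun i => (Fin.snoc τ true : Fin (s+1) → Bool) i = true).card = p then
        ∏ j ∈ range (s+1+1), Y (pathVertex u (extb (s+1) (Fin.snoc τ true)) j) else 0)
      = (if (univ.filter fun i : Fin s => τ i = true).card + 1 = p
          then C * ∏ j ∈ range (s+1), Y (pathVertex u (extb s τ) j) else 0) := by
    intro τ; simpa using stepgen τ true
  have stepF : ∀ τ : Fin s → Bool,
      (if (univ.filter fun i => (Fin.snoc τ false : Fin (s+1) → Bool) i = true).card = p then
        ∏ j ∈ range (s+1+1), Y (pathVertex u (extb (s+1) (Fin.snoc τ false)) j) else 0)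
      = (if (univ.filter fun i : Fin s => τ i = true).card = p
          then C * ∏ j ∈ range (s+1), Y (pathVertex u (extb s τ) j) else 0) := by
    intro τ; simpa using stepgen τ false
  show (∑ σ : Fin (s+1) → Bool,
      if (univ.filter fun i => σ i = true).card = p then
        ∏ j ∈ range (s+1+1), Y (pathVertex u (extb (s+1) σ) j) else 0) = _
  rw [sum_snoc]
  simp only [stepT, stepF]
  rw [Finset.sum_add_distrib]
  have h1 : (∑ τ : Fin s → Bool,
      if (univ.filter fun i : Fin s => τ i = true).card + 1 = p
        then C * ∏ j ∈ range (s+1), Y (pathVertex u (extb s τ) j) else 0)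
      = C * (if p = 0 then 0 else Wn Y u s (p-1)) := by
    rcases Nat.eq_zero_or_pos p with hp0 | hp0
    · subst hp0; simp
    · have he : (if p = 0 then (0:ℝ) else Wn Y u s (p-1)) = Wn Y u s (p-1) := by
        rw [if_neg (by omega)]
      rw [he]
      unfold Wn
      rw [Finset.mul_sum]
      show _ = ∑ τ : Fin s → Bool, C * (if (univ.filter fun i : Fin s => τ i = true).card = p-1
        then ∏ j ∈ range (s+1), Y (pathVertex u (extb s τ) j) else 0)
      apply Finset.sum_congr rfl
      intro τ _
      rw [mul_ite, mul_zero]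
      congr 1
      rw [eq_iff_iff]
      omega
  have h2 : (∑ τ : Fin s → Bool,
      if (univ.filter fun i : Fin s => τ i = true).card = p
        then C * ∏ j ∈ range (s+1), Y (pathVertex u (extb s τ) j) else 0)
      = C * (if p = s+1 then 0 else Wn Y u s p) := by
    rcases eq_or_ne p (s+1) with hp0 | hp0
    · rw [if_pos hp0, mul_zero]
      apply Finset.sum_eq_zero
      intro τ _
      rw [if_neg]
      have := Finset.card_filter_le (univ : Finset (Fin s)) (fun i => τ i = true)
      simp only [Finset.card_univ, Fintype.card_fin] at this
      omega
    · rw [if_neg hp0]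
      unfold Wn
      rw [Finset.mul_sum]
      show _ = ∑ τ : Fin s → Bool, C * (if (univ.filter fun i : Fin s => τ i = true).card = p
        then ∏ j ∈ range (s+1), Y (pathVertex u (extb s τ) j) else 0)
      apply Finset.sum_congr rfl
      intro τ _
      rw [mul_ite, mul_zero]
  rw [h1, h2]
  ring

lemma Wn_zero (Y : ℤ × ℤ → ℝ) (u : ℤ × ℤ) : Wn Y u 0 0 = Y u := by
  unfold Wn
  rw [Fintype.sum_unique]
  simp [pathVertex]

lemma Wn_eq_Zr (Y : ℤ × ℤ → ℝ) : ∀ (n : ℕ) (u : ℤ × ℤ) (p q : ℕ), p + q = n →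
    Wn Y u n p = Zr Y u p q := by
  intro n
  induction n with
  | zero =>
    intro u p q h
    have hp : p = 0 := by omega
    have hq : q = 0 := by omega
    subst hp; subst hq
    rw [Wn_zero, Zr]
  | succ s ih =>
    intro u p q h
    rw [Wn_rec Y u s p (by omega)]
    cases p with
    | zero =>
      have hq : q = s+1 := by omega
      subst hq
      rw [if_pos rfl, if_neg (by omega), ih u 0 s (by omega), Zr_0s]
      rw [show (s+1-0 : ℕ) = s+1 by omega]
      norm_num
      ring
    | succ p' =>
      cases q with
      | zero =>
        have hp' : p' = s := by omega
        subst hp'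
        rw [if_neg (by omega), if_pos rfl, Nat.add_sub_cancel, ih u p' 0 (by omega), Zr_s0]
        rw [show (p'+1-(p'+1) : ℕ) = 0 by omega]
        norm_num
        ring
      | succ q' =>
        rw [if_neg (by omega), if_neg (by omega), Nat.add_sub_cancel,
          ih u p' (q'+1) (by omega), ih u (p'+1) q' (by omega), Zr_ss]
        rw [show (s+1-(p'+1) : ℕ) = q'+1 by omega]
        norm_num
        ring

noncomputable def WEn (Y : ℤ × ℤ → ℝ) (u : ℤ × ℤ) (n p k : ℕ) : ℝ :=
  ∑ σ : Fin n → Bool,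
    if ((univ.filter fun i => σ i = true).card = p ∧ ∀ i : Fin n, (i:ℕ) < k → σ i = true) then
      ∏ j ∈ range (n+1), Y (pathVertex u (extb n σ) j)
    else 0

lemma WEn_zero (Y : ℤ × ℤ → ℝ) (u : ℤ × ℤ) (n p : ℕ) : WEn Y u n p 0 = Wn Y u n p := by
  unfold WEn Wn
  apply Finset.sum_congr rfl
  intro σ _
  congr 1
  rw [eq_iff_iff]
  simp

lemma WEn_cons (Y : ℤ × ℤ → ℝ) (u : ℤ × ℤ) (s p k : ℕ) :
    WEn Y u (s+1) (p+1) (k+1) = Y u * WEn Y (u.1+1, u.2) s p k := by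
  unfold WEn
  rw [sum_cons]
  have hF : ∀ τ : Fin s → Bool,
      (if ((univ.filter fun i => (Fin.cons false τ : Fin (s+1) → Bool) i = true).card = p+1 ∧
          ∀ i : Fin (s+1), (i:ℕ) < k+1 → (Fin.cons false τ : Fin (s+1) → Bool) i = true) then
        ∏ j ∈ range (s+1+1), Y (pathVertex u (extb (s+1) (Fin.cons false τ)) j) else 0) = 0 := by
    intro τ
    rw [if_neg]
    rintro ⟨-, hall⟩
    have h0 := hall 0 (by simp)
    rw [Fin.cons_zero (α := fun _ : Fin (s+1) => Bool)] at h0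
    exact Bool.false_ne_true h0
  have hT : ∀ τ : Fin s → Bool,
      (if ((univ.filter fun i => (Fin.cons true τ : Fin (s+1) → Bool) i = true).card = p+1 ∧
          ∀ i : Fin (s+1), (i:ℕ) < k+1 → (Fin.cons true τ : Fin (s+1) → Bool) i = true) then
        ∏ j ∈ range (s+1+1), Y (pathVertex u (extb (s+1) (Fin.cons true τ)) j) else 0)
      = Y u * (if ((univ.filter fun i : Fin s => τ i = true).card = p ∧
          ∀ i : Fin s, (i:ℕ) < k → τ i = true) then
          ∏ j ∈ range (s+1), Y (pathVertex (u.1+1, u.2) (extb s τ) j) else 0) := by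
    intro τ
    have hiff : ((univ.filter fun i => (Fin.cons true τ : Fin (s+1) → Bool) i = true).card = p+1 ∧
          ∀ i : Fin (s+1), (i:ℕ) < k+1 → (Fin.cons true τ : Fin (s+1) → Bool) i = true)
        ↔ ((univ.filter fun i : Fin s => τ i = true).card = p ∧
          ∀ i : Fin s, (i:ℕ) < k → τ i = true) := by
      rw [_root_.card_cons]
      constructor
      · rintro ⟨hc, hall⟩
        refine ⟨by have h' := hc; simp at h'; omega, fun i hi => ?_⟩
        have := hall i.succ (by rw [Fin.val_succ]; omega)
        rwa [Fin.cons_succ (α := fun _ : Fin (s+1) => Bool)] at this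
      · rintro ⟨hc, hall⟩
        refine ⟨by simp; omega, fun i hi => ?_⟩
        induction i using Fin.cases with
        | zero => exact Fin.cons_zero (α := fun _ : Fin (s+1) => Bool) true τ
        | succ j =>
          rw [Fin.cons_succ (α := fun _ : Fin (s+1) => Bool)]
          exact hall j (by rw [Fin.val_succ] at hi; omega)
    have hprod : (∏ j ∈ range (s+1+1), Y (pathVertex u (extb (s+1) (Fin.cons true τ)) j))
        = Y u * ∏ j ∈ range (s+1), Y (pathVertex (u.1+1, u.2) (extb s τ) j) := by
      rw [Finset.prod_range_succ' (fun j => Y (pathVertex u (extb (s+1) (Fin.cons true τ)) j)) (s+1)]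
      rw [pathVertex_zero, mul_comm]
      congr 1
      apply Finset.prod_congr rfl
      intro j _
      rw [pathVertex_shift u _ (by rw [extb_cons_zero]) j, extb_cons_eq]
    rw [hprod]
    by_cases hc : ((univ.filter fun i : Fin s => τ i = true).card = p ∧
        ∀ i : Fin s, (i:ℕ) < k → τ i = true)
    · rw [if_pos (hiff.mpr hc), if_pos hc]
    · rw [if_neg (fun hx => hc (hiff.mp hx)), if_neg hc, mul_zero]
  simp only [hT, hF, add_zero]
  rw [← Finset.mul_sum]

lemma WEn_eq (Y : ℤ × ℤ → ℝ) : ∀ (k : ℕ) (u : ℤ × ℤ) (n p : ℕ), k ≤ p → p ≤ n →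
    WEn Y u n p k
      = (∏ j ∈ range k, Y (u.1+(j:ℤ), u.2)) * Wn Y (u.1+(k:ℤ), u.2) (n-k) (p-k) := by
  intro k
  induction k with
  | zero =>
    intro u n p _ _
    simp only [range_zero, prod_empty, Nat.sub_zero, Nat.cast_zero, add_zero, Prod.mk.eta,
      one_mul, WEn_zero]
  | succ k ih =>
    intro u n p hk hp
    obtain ⟨p', rfl⟩ : ∃ p', p = p'+1 := ⟨p-1, by omega⟩
    obtain ⟨s, rfl⟩ : ∃ s, n = s+1 := ⟨n-1, by omega⟩
    rw [WEn_cons, ih (u.1+1, u.2) s p' (by omega) (by omega)]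
    rw [show s+1-(k+1) = s-k by omega, show p'+1-(k+1) = p'-k by omega]
    have hpt : ((u.1+1, u.2).1 + (k:ℤ), (u.1+1, u.2).2) = (u.1 + ((k+1:ℕ):ℤ), u.2) := by
      simp; push_cast; ring
    rw [hpt]
    rw [Finset.prod_range_succ' (fun j => Y (u.1+(j:ℤ), u.2)) k]
    have h0 : Y (u.1 + ((0:ℕ):ℤ), u.2) = Y u := by norm_num
    have hfac : ∀ j : ℕ, Y ((u.1+1, u.2).1 + (j:ℤ), (u.1+1, u.2).2) = Y (u.1 + (((j+1:ℕ)):ℤ), u.2) := by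
      intro j
      have : ((u.1+1, u.2).1 + (j:ℤ), (u.1+1, u.2).2) = (u.1 + (((j+1:ℕ)):ℤ), u.2) := by
        simp; push_cast; ring
      rw [this]
    rw [h0]
    rw [Finset.prod_congr rfl (fun j _ => hfac j)]
    ring

lemma WEn_top (Y : ℤ × ℤ → ℝ) (u : ℤ × ℤ) (n k : ℕ) : WEn Y u n n k = Wn Y u n n := by
  unfold WEn Wn
  apply Finset.sum_congr rfl
  intro σ _
  congr 1
  rw [eq_iff_iff]
  constructor
  · rintro ⟨hc, -⟩; exact hc
  · intro hc
    refine ⟨hc, fun i _ => ?_⟩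
    have huniv : (univ.filter fun i : Fin n => σ i = true) = univ := by
      apply Finset.eq_univ_of_card
      rw [hc, Fintype.card_fin]
    have := Finset.mem_filter.mp (huniv ▸ Finset.mem_univ i)
    exact this.2

lemma WEn_gt (Y : ℤ × ℤ → ℝ) (u : ℤ × ℤ) (n p k : ℕ) (hk : p < k) (hn : p < n) :
    WEn Y u n p k = 0 := by
  unfold WEn
  apply Finset.sum_eq_zero
  intro σ _
  rw [if_neg]
  rintro ⟨hc, hall⟩
  have hsub : (univ.filter fun i : Fin n => (i:ℕ) < p+1) ⊆ (univ.filter fun i : Fin n => σ i = true) := by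
    intro i hi
    rw [Finset.mem_filter] at hi ⊢
    exact ⟨hi.1, hall i (by omega)⟩
  have hcard : (univ.filter fun i : Fin n => (i:ℕ) < p+1).card = p+1 := by
    rw [card_filter, Fin.sum_univ_eq_sum_range (fun i => if i < p+1 then 1 else 0) n,
      ← card_filter]
    rw [show (range n).filter (fun i => i < p+1) = range (p+1) from by
      ext i; simp only [mem_filter, mem_range]; omega]
    exact card_range (p+1)
  have := Finset.card_le_card hsub
  omega

lemma WEn_nonneg (Y : ℤ × ℤ → ℝ) (hY : ∀ z, 0 < Y z) (u : ℤ × ℤ) (n p k : ℕ) :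
    0 ≤ WEn Y u n p k := by
  apply Finset.sum_nonneg
  intro σ _
  split
  · exact Finset.prod_nonneg fun j _ => (hY _).le
  · exact le_rfl

lemma WEn_le_Wn (Y : ℤ × ℤ → ℝ) (hY : ∀ z, 0 < Y z) (u : ℤ × ℤ) (n p k : ℕ) :
    WEn Y u n p k ≤ Wn Y u n p := by
  unfold WEn Wn
  apply Finset.sum_le_sum
  intro σ _
  by_cases hc : ((univ.filter fun i : Fin n => σ i = true).card = p ∧
      ∀ i : Fin n, (i:ℕ) < k → σ i = true)
  · rw [if_pos hc, if_pos hc.1]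
  · rw [if_neg hc]
    split
    · exact Finset.prod_nonneg fun j _ => (hY _).le
    · exact le_rfl


lemma ratio_mono_iter (Y : ℤ × ℤ → ℝ) (hY : ∀ z, 0 < Y z) (u : ℤ × ℤ) (k : ℕ) :
    ∀ (l a q : ℕ),
    Zr Y (u.1 + (k:ℤ), u.2) a q / Zr Y u (k+a) q ≤
    Zr Y (u.1 + (k:ℤ), u.2) (a+l) q / Zr Y u (k+(a+l)) q := by
  intro l
  induction l with
  | zero => intro a q; simp
  | succ l ih =>
    intro a q
    refine le_trans (ih a q) ?_
    have h := ratio_mono Y hY k u (a+l) q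
    rw [show k+(a+l)+1 = k+(a+(l+1)) by omega] at h
    rw [show a+(l+1) = (a+l)+1 by omega]
    exact h

lemma ratio_anti_iter (Y : ℤ × ℤ → ℝ) (hY : ∀ z, 0 < Y z) (u : ℤ × ℤ) (k : ℕ) :
    ∀ (m a q' : ℕ),
    Zr Y (u.1 + (k:ℤ), u.2) a (q'+m) / Zr Y u (k+a) (q'+m) ≤
    Zr Y (u.1 + (k:ℤ), u.2) a q' / Zr Y u (k+a) q' := by
  intro m
  induction m with
  | zero => intro a q'; simp
  | succ m ih =>
    intro a q'
    refine le_trans ?_ (ih a q')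
    have h := ratio_anti Y hY k u a (q'+m)
    rw [show q'+m+1 = q'+(m+1) by omega] at h
    exact h

lemma Zfun_eq_Wn (Y : ℤ × ℤ → ℝ) (v : ℤ × ℤ) (h1 : 0 ≤ v.1) (h2 : 0 ≤ v.2) :
    Zfun Y 0 v = Wn Y 0 (v.1.toNat + v.2.toNat) v.1.toNat := by
  rw [show Zfun Y 0 v = if (0:ℤ) ≤ v.1 ∧ (0:ℤ) ≤ v.2 then
        Wn Y 0 ((v.1 - 0).toNat + (v.2 - 0).toNat) (v.1 - 0).toNat else 0 from rfl,
      if_pos ⟨h1, h2⟩, show (v.1 - 0).toNat = v.1.toNat by omega,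
      show (v.2 - 0).toNat = v.2.toNat by omega]

lemma ZExit_eq_WEn (Y : ℤ × ℤ → ℝ) (z : ℤ × ℤ) (k : ℕ) (h1 : 0 ≤ z.1) (h2 : 0 ≤ z.2) :
    ZExit Y z k = WEn Y 0 (z.1.toNat + z.2.toNat) z.1.toNat k := by
  rw [show ZExit Y z k = if 0 ≤ z.1 ∧ 0 ≤ z.2 then
        WEn Y 0 (z.1.toNat + z.2.toNat) z.1.toNat k else 0 from rfl, if_pos ⟨h1, h2⟩]

/-- Shifting the endpoint to the right or down increases the probability that the
polymer takes at least `k` initial `e₁` steps. -/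
theorem stmt6 (Y : ℤ × ℤ → ℝ) (hY : ∀ z, 0 < Y z) (k l m : ℕ) (x : ℤ × ℤ)
    (hx1 : 0 ≤ x.1) (hx2 : 0 ≤ x.2) (hx2' : 0 ≤ x.2 - m) :
    QExit Y x k ≤ QExit Y (x + ((l : ℤ), -(m : ℤ))) k := by
  have hfst : (x + ((l : ℤ), -(m : ℤ))).1 = x.1 + l := by simp
  have hsnd : (x + ((l : ℤ), -(m : ℤ))).2 = x.2 - m := by
    simp [sub_eq_add_neg]
  have hx1' : 0 ≤ (x + ((l : ℤ), -(m : ℤ))).1 := by rw [hfst]; positivity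
  have hx2'' : 0 ≤ (x + ((l : ℤ), -(m : ℤ))).2 := by rw [hsnd]; exact hx2'
  unfold QExit
  rw [Zfun_eq_Wn Y x hx1 hx2, ZExit_eq_WEn Y x k hx1 hx2,
      Zfun_eq_Wn Y _ hx1' hx2'', ZExit_eq_WEn Y _ k hx1' hx2'']
  rw [hfst, hsnd]
  rw [show (x.1 + (l:ℤ)).toNat = x.1.toNat + l by omega,
      show (x.2 - (m:ℤ)).toNat = x.2.toNat - m by omega]
  obtain ⟨q', hq'1, hq'2⟩ : ∃ q', x.2.toNat - m = q' ∧ x.2.toNat = q' + m :=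
    ⟨x.2.toNat - m, rfl, by omega⟩
  rw [hq'1]
  set p := x.1.toNat with hp
  set q := x.2.toNat with hq
  have hWpos : ∀ P Q : ℕ, 0 < Wn Y 0 (P+Q) P := fun P Q => by
    rw [Wn_eq_Zr Y (P+Q) 0 P Q rfl]; exact Zr_pos Y hY 0 P Q
  by_cases hq0 : q' = 0
  · -- right-hand side equals 1
    subst hq0
    have hrhs : WEn Y 0 (p+l+0) (p+l) k = Wn Y 0 (p+l+0) (p+l) := by
      rw [Nat.add_zero, WEn_top]
    rw [hrhs, div_self (hWpos (p+l) 0).ne']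
    rw [div_le_one (hWpos p q)]
    exact WEn_le_Wn Y hY 0 (p+q) p k
  · by_cases hk : p < k
    · rw [WEn_gt Y 0 (p+q) p k hk (by omega), zero_div]
      exact div_nonneg (WEn_nonneg Y hY 0 (p+l+q') (p+l) k) (hWpos (p+l) q').le
    · push_neg at hk
      rw [WEn_eq Y k 0 (p+q) p hk (by omega),
          WEn_eq Y k 0 (p+l+q') (p+l) (by omega) (by omega)]
      rw [show (p+l) - k = p-k+l by omega]
      rw [Wn_eq_Zr Y ((p+q)-k) _ (p-k) q (by omega),
          Wn_eq_Zr Y ((p+l+q')-k) _ (p-k+l) q' (by omega),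
          Wn_eq_Zr Y (p+q) 0 p q rfl, Wn_eq_Zr Y (p+l+q') 0 (p+l) q' rfl]
      rw [mul_div_assoc, mul_div_assoc]
      apply mul_le_mul_of_nonneg_left _ (Finset.prod_nonneg fun j _ => (hY _).le)
      have h1 := ratio_mono_iter Y hY 0 k l (p-k) q
      rw [show k+(p-k) = p by omega, show k+(p-k+l) = p+l by omega] at h1
      have h2 := ratio_anti_iter Y hY 0 k m (p-k+l) q'
      rw [show k+(p-k+l) = p+l by omega, show q'+m = q by omega] at h2
      exact le_trans h1 h2
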